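/- Let σ_1 = … = σ_k < σ_{k+1} ≤ … ≤ σ_n with σ_1 < 0, let d ∈ R^n, and let Σ = diag(σ_1, …, σ_n). If k ≥ 2, or if k = 1 and d_1 = 0, then the problem of minimizing (1/2) y^T Σ y + d^T y over {y ∈ R^n : y^T y ≤ 1} has no local minimizer that is not a global minimizer. Otherwise (k = 1 and d_1 ≠ 0), there is at most one local non-global minimizer ȳ, and its associated Lagrange multiplier μ̄ (i.e., (Σ + μ̄ I_n) ȳ + d = 0 and ȳ^T ȳ = 1) satisfies μ̄ ∈ (max{−σ_2, 0}, −σ_1), φ(μ̄) = 0 and φ'(μ̄) ≥ 0, where φ(μ) = Σ_{i=1}^n d_i^2/(σ_i + μ)^2 − 1. -/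

import Mathlib

open Set Filter Topology Finset

set_option maxHeartbeats 2000000

namespace TRS

variable {n : ℕ}

noncomputable def fQ (σ d : Fin n → ℝ) (y : Fin n → ℝ) : ℝ :=
  (1 / 2) * ∑ i, σ i * y i ^ 2 + ∑ i, d i * y i

def BQ (n : ℕ) : Set (Fin n → ℝ) := {y | ∑ i, y i * y i ≤ 1}

lemma fQ_eq (σ d : Fin n → ℝ) (y : Fin n → ℝ) :
    fQ σ d y = ∑ i, ((1/2) * σ i * y i ^ 2 + d i * y i) := by
  unfold fQ
  rw [Finset.sum_add_distrib, Finset.mul_sum]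
  congr 1
  exact Finset.sum_congr rfl (fun i _ => by ring)

lemma kill {f : (Fin n → ℝ) → ℝ} {B : Set (Fin n → ℝ)} {y : Fin n → ℝ}
    (h : IsLocalMinOn f B y) {c : ℝ → (Fin n → ℝ)}
    (hc : Tendsto c (𝓝[>] (0:ℝ)) (𝓝 y))
    (hB : ∀ᶠ s in 𝓝[>] (0:ℝ), c s ∈ B)
    (hf : ∀ᶠ s in 𝓝[>] (0:ℝ), f (c s) < f y) : False := by
  have h' : ∀ᶠ x in 𝓝[B] y, f y ≤ f x := h
  have hc' : Tendsto c (𝓝[>] (0:ℝ)) (𝓝[B] y) :=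
    tendsto_nhdsWithin_iff.2 ⟨hc, hB⟩
  obtain ⟨s, h1, h2⟩ := ((hc'.eventually h').and hf).exists
  exact absurd h1 (not_le.2 h2)

lemma ev_Ioo {ε : ℝ} (hε : 0 < ε) {p : ℝ → Prop} (h : ∀ s, 0 < s → s < ε → p s) :
    ∀ᶠ s in 𝓝[>] (0:ℝ), p s := by
  filter_upwards [Ioo_mem_nhdsGT_of_mem (by exact ⟨le_refl 0, hε⟩ : (0:ℝ) ∈ Ico 0 ε)]
    with s hs
  exact h s hs.1 hs.2

lemma global_min (σ d : Fin n → ℝ) (y : Fin n → ℝ) (μ : ℝ)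
    (hst : ∀ i, (σ i + μ) * y i + d i = 0) (hy : ∑ i, y i * y i = 1)
    (hμ : 0 ≤ μ) (hpos : ∀ i, 0 ≤ σ i + μ) :
    ∀ x ∈ BQ n, fQ σ d y ≤ fQ σ d x := by
  intro x hx
  have key : fQ σ d x - fQ σ d y
      = ∑ i, ((1/2)*(σ i + μ)*(x i - y i)^2 + (μ/2)*(y i * y i - x i * x i)) := by
    rw [fQ_eq, fQ_eq, ← Finset.sum_sub_distrib]
    refine Finset.sum_congr rfl (fun i _ => ?_)
    have hd : d i = -((σ i + μ) * y i) := by linarith [hst i]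
    rw [hd]; ring
  rw [Finset.sum_add_distrib, ← Finset.mul_sum, Finset.sum_sub_distrib, hy] at key
  have h1 : 0 ≤ ∑ i, (1/2)*(σ i + μ)*(x i - y i)^2 :=
    Finset.sum_nonneg (fun i _ =>
      mul_nonneg (mul_nonneg (by norm_num) (hpos i)) (sq_nonneg _))
  have hx' : ∑ i, x i * x i ≤ 1 := hx
  have h2 : (0:ℝ) ≤ μ/2 * (1 - ∑ i, x i * x i) :=
    mul_nonneg (by linarith) (by linarith)
  linarith


lemma diff_update (σ d : Fin n → ℝ) (y : Fin n → ℝ) (i0 : Fin n) (t : ℝ) :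
    fQ σ d (fun i => if i = i0 then y i0 + t else y i) - fQ σ d y
      = t * (σ i0 * y i0 + d i0) + (1/2) * t^2 * σ i0 := by
  rw [fQ_eq, fQ_eq, ← Finset.sum_sub_distrib]
  rw [Finset.sum_eq_single_of_mem i0 (Finset.mem_univ _) ?h]
  · simp; ring
  · intro b _ hb; simp only [if_neg hb]; ring

lemma norm_update (y : Fin n → ℝ) (i0 : Fin n) (t : ℝ) :
    (∑ i, (fun i => if i = i0 then y i0 + t else y i) i
        * (fun i => if i = i0 then y i0 + t else y i) i)
      = (∑ i, y i * y i) + (2 * t * y i0 + t^2) := by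
  have : (∑ i, ((fun i => if i = i0 then y i0 + t else y i) i
        * (fun i => if i = i0 then y i0 + t else y i) i - y i * y i))
      = 2 * t * y i0 + t^2 := by
    rw [Finset.sum_eq_single_of_mem i0 (Finset.mem_univ _) ?h]
    · simp; ring
    · intro b _ hb; simp only [if_neg hb]; ring
  rw [Finset.sum_sub_distrib] at this
  linarith

lemma tendsto_update (y : Fin n → ℝ) (i0 : Fin n) {g : ℝ → ℝ}
    (hg : Tendsto g (𝓝[>] (0:ℝ)) (𝓝 (y i0))) :
    Tendsto (fun s => (fun i => if i = i0 then g s else y i))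
      (𝓝[>] (0:ℝ)) (𝓝 y) := by
  refine tendsto_pi_nhds.2 (fun i => ?_)
  by_cases hi : i = i0
  · subst hi; simpa using hg
  · simpa [hi] using tendsto_const_nhds

lemma no_interior_min (σ d : Fin n → ℝ) {y : Fin n → ℝ} (i0 : Fin n)
    (hσ : σ i0 < 0) (hmin : IsLocalMinOn (fQ σ d) (BQ n) y)
    (hy : ∑ i, y i * y i < 1) : False := by
  set g : ℝ := σ i0 * y i0 + d i0 with hgdef
  obtain ⟨τ, hτsq, hτg⟩ : ∃ τ : ℝ, τ^2 = 1 ∧ τ * g ≤ 0 := by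
    rcases le_or_gt g 0 with h | h
    · exact ⟨1, by norm_num, by linarith⟩
    · exact ⟨-1, by norm_num, by nlinarith⟩
  set c : ℝ → Fin n → ℝ := fun s => (fun i => if i = i0 then y i0 + τ*s else y i)
    with hcdef
  refine kill hmin (c := c) ?_ ?_ ?_
  · refine tendsto_update y i0 ?_
    have : Tendsto (fun s : ℝ => y i0 + τ*s) (𝓝 (0:ℝ)) (𝓝 (y i0 + τ*0)) := by
      exact (continuous_const.add (continuous_const.mul continuous_id)).tendsto 0
    simpa using this.mono_left nhdsWithin_le_nhds
  · have htt : Tendsto (fun s : ℝ => (∑ i, y i * y i) + (2*(τ*s)*y i0 + (τ*s)^2))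
        (𝓝[>] (0:ℝ)) (𝓝 (∑ i, y i * y i)) := by
      have : Continuous (fun s : ℝ => (∑ i, y i * y i) + (2*(τ*s)*y i0 + (τ*s)^2)) := by
        fun_prop
      have h0 := (this.tendsto 0).mono_left (nhdsWithin_le_nhds (s := Ioi (0:ℝ)))
      simpa using h0
    filter_upwards [htt.eventually_lt_const hy] with s hs
    show ∑ i, c s i * c s i ≤ 1
    rw [hcdef]
    rw [norm_update y i0 (τ*s)]
    exact le_of_lt hs
  · refine ev_Ioo one_pos (fun s hs _ => ?_)
    have hdiff := diff_update σ d y i0 (τ*s)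
    have h1 : (τ*s) * g ≤ 0 := by
      have : (τ*s)*g = s*(τ*g) := by ring
      rw [this]
      exact mul_nonpos_of_nonneg_of_nonpos (le_of_lt hs) hτg
    rw [hgdef] at h1
    have h2 : (1/2) * (τ*s)^2 * σ i0 < 0 := by
      have he : (τ*s)^2 = s^2 := by rw [mul_pow, hτsq, one_mul]
      rw [he]; nlinarith [mul_pos hs hs]
    have hlt : fQ σ d (c s) - fQ σ d y < 0 := by rw [hcdef, hdiff]; linarith
    linarith

lemma scale_fQ (σ d : Fin n → ℝ) (y : Fin n → ℝ) (t : ℝ) :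
    fQ σ d (fun i => t * y i)
      = t^2*((1/2) * ∑ i, σ i * y i^2) + t*(∑ i, d i * y i) := by
  rw [fQ_eq, Finset.mul_sum, Finset.mul_sum, Finset.mul_sum, ← Finset.sum_add_distrib]
  exact Finset.sum_congr rfl (fun i _ => by ring)

lemma sum_dy (σ d : Fin n → ℝ) {y : Fin n → ℝ} {μ : ℝ}
    (hst : ∀ i, (σ i + μ) * y i + d i = 0) (hy : ∑ i, y i * y i = 1) :
    ∑ i, d i * y i = -(∑ i, σ i * y i^2) - μ := by
  have h1 : ∀ i, d i * y i = -(σ i * y i^2) - μ*(y i * y i) := by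
    intro i
    have hd : d i = -((σ i + μ) * y i) := by linarith [hst i]
    rw [hd]; ring
  rw [Finset.sum_congr rfl (fun i _ => h1 i), Finset.sum_sub_distrib,
    ← Finset.sum_neg_distrib, ← Finset.mul_sum, hy]
  ring

lemma mu_nonneg (σ d : Fin n → ℝ) {y : Fin n → ℝ} {μ : ℝ}
    (hmin : IsLocalMinOn (fQ σ d) (BQ n) y)
    (hst : ∀ i, (σ i + μ) * y i + d i = 0) (hy : ∑ i, y i * y i = 1) :
    0 ≤ μ := by
  by_contra hcon
  push_neg at hcon
  set A : ℝ := ∑ i, σ i * y i^2 with hA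
  have hD := sum_dy σ d hst hy
  set c : ℝ → Fin n → ℝ := fun s => (fun i => (1-s) * y i) with hcdef
  have hfy : fQ σ d y = (1/2)*(∑ i, σ i * y i^2) + (∑ i, d i * y i) := rfl
  refine kill hmin (c := c) ?_ ?_ ?_
  · refine tendsto_pi_nhds.2 (fun i => ?_)
    have : Tendsto (fun s : ℝ => (1-s) * y i) (𝓝 (0:ℝ)) (𝓝 ((1-0) * y i)) := by
      exact ((continuous_const.sub continuous_id).mul continuous_const).tendsto 0
    simpa using this.mono_left nhdsWithin_le_nhds
  · refine ev_Ioo one_pos (fun s hs1 hs2 => ?_)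
    show ∑ i, (1-s) * y i * ((1-s) * y i) ≤ 1
    have : ∑ i, (1-s) * y i * ((1-s) * y i) = (1-s)^2 * ∑ i, y i * y i := by
      rw [Finset.mul_sum]; exact Finset.sum_congr rfl (fun i _ => by ring)
    rw [this, hy]; nlinarith
  · have htt : Tendsto (fun s : ℝ => μ + s*(A/2)) (𝓝[>] (0:ℝ)) (𝓝 μ) := by
      have : Continuous (fun s : ℝ => μ + s*(A/2)) := by fun_prop
      have h0 := (this.tendsto 0).mono_left (nhdsWithin_le_nhds (s := Ioi (0:ℝ)))
      simpa using h0
    filter_upwards [htt.eventually_lt_const hcon, self_mem_nhdsWithin] with s hs hs0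
    have hs0' : (0:ℝ) < s := hs0
    have hval : fQ σ d (c s) = (1-s)^2*((1/2)*A) + (1-s)*(∑ i, d i * y i) := scale_fQ σ d y (1-s)
    have : fQ σ d (c s) - fQ σ d y = s * (μ + s*(A/2)) := by
      rw [hval, hfy, hD, ← hA]; ring
    nlinarith

lemma kill_gradzero (σ d : Fin n → ℝ) {y : Fin n → ℝ} (i0 : Fin n)
    (hσ : σ i0 < 0) (hy0 : y i0 ≠ 0) (hg : σ i0 * y i0 + d i0 = 0)
    (hmin : IsLocalMinOn (fQ σ d) (BQ n) y) (hy : ∑ i, y i * y i = 1) : False := by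
  obtain ⟨τ, hτsq, hτy⟩ : ∃ τ : ℝ, τ^2 = 1 ∧ τ * y i0 = -|y i0| := by
    rcases le_or_gt 0 (y i0) with h | h
    · exact ⟨-1, by norm_num, by rw [abs_of_nonneg h]; ring⟩
    · exact ⟨1, by norm_num, by rw [abs_of_neg h]; ring⟩
  have habs : 0 < |y i0| := abs_pos.2 hy0
  set c : ℝ → Fin n → ℝ := fun s => (fun i => if i = i0 then y i0 + τ*s else y i)
    with hcdef
  refine kill hmin (c := c) ?_ ?_ ?_
  · refine tendsto_update y i0 ?_
    have : Tendsto (fun s : ℝ => y i0 + τ*s) (𝓝 (0:ℝ)) (𝓝 (y i0 + τ*0)) :=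
      (continuous_const.add (continuous_const.mul continuous_id)).tendsto 0
    simpa using this.mono_left nhdsWithin_le_nhds
  · refine ev_Ioo habs (fun s hs1 hs2 => ?_)
    show ∑ i, c s i * c s i ≤ 1
    rw [hcdef, norm_update y i0 (τ*s), hy]
    have h1 : 2*(τ*s)*y i0 = -2*s*|y i0| := by
      have : 2*(τ*s)*y i0 = 2*s*(τ*y i0) := by ring
      rw [this, hτy]; ring
    have h2 : (τ*s)^2 = s^2 := by rw [mul_pow, hτsq, one_mul]
    rw [h1, h2]; nlinarith
  · refine ev_Ioo one_pos (fun s hs _ => ?_)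
    have hdiff := diff_update σ d y i0 (τ*s)
    rw [hg] at hdiff
    have h2 : (τ*s)^2 = s^2 := by rw [mul_pow, hτsq, one_mul]
    have hlt : fQ σ d (c s) - fQ σ d y < 0 := by
      rw [hcdef, hdiff]
      have he : τ*s*0 + 1/2*(τ*s)^2*σ i0 = 1/2*s^2*σ i0 := by
        rw [mul_pow, hτsq]; ring
      rw [he]; nlinarith [mul_pos hs hs]
    linarith


lemma curve_norm (y v : Fin n → ℝ) (hy : ∑ i, y i * y i = 1)
    (hov : ∑ i, y i * v i = 0) (u s : ℝ) (hu : u^2 = 1 - s^2 * (∑ i, v i * v i)) :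
    ∑ i, (u * y i + s * v i) * (u * y i + s * v i) = 1 := by
  have h : ∑ i, (u * y i + s * v i) * (u * y i + s * v i)
      = u^2 * (∑ i, y i * y i) + (2*u*s) * (∑ i, y i * v i)
        + s^2 * (∑ i, v i * v i) := by
    rw [Finset.mul_sum, Finset.mul_sum, Finset.mul_sum, ← Finset.sum_add_distrib,
      ← Finset.sum_add_distrib]
    exact Finset.sum_congr rfl (fun i _ => by ring)
  rw [h, hy, hov, hu]; ring

lemma curve_fQ (σ d : Fin n → ℝ) (y v : Fin n → ℝ) (u s : ℝ) :
    fQ σ d (fun i => u * y i + s * v i)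
      = (1/2)*u^2*(∑ i, σ i * y i^2) + u*s*(∑ i, σ i * y i * v i)
        + (1/2)*s^2*(∑ i, σ i * v i^2) + u*(∑ i, d i * y i) + s*(∑ i, d i * v i) := by
  rw [fQ_eq]
  rw [Finset.mul_sum, Finset.mul_sum, Finset.mul_sum, Finset.mul_sum, Finset.mul_sum]
  rw [← Finset.sum_add_distrib, ← Finset.sum_add_distrib, ← Finset.sum_add_distrib,
    ← Finset.sum_add_distrib]
  exact Finset.sum_congr rfl (fun i _ => by ring)

lemma curve_delta (σ d : Fin n → ℝ) (y v : Fin n → ℝ) (u s : ℝ) :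
    fQ σ d (fun i => u * y i + s * v i) - fQ σ d y
      = (1/2)*(u^2-1)*(∑ i, σ i * y i^2) + (u - 1)*(∑ i, d i * y i)
        + s*u*(∑ i, σ i * y i * v i) + s*(∑ i, d i * v i)
        + (1/2)*s^2*(∑ i, σ i * v i^2) := by
  rw [curve_fQ]
  have h : fQ σ d y = (1/2)*(∑ i, σ i * y i^2) + ∑ i, d i * y i := rfl
  rw [h]; ring

lemma sum_sq_pos {v : Fin n → ℝ} (hv : ∃ i, v i ≠ 0) : 0 < ∑ i, v i * v i := by
  obtain ⟨i, hi⟩ := hv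
  exact Finset.sum_pos' (fun j _ => mul_self_nonneg _)
    ⟨i, Finset.mem_univ i, mul_self_pos.2 hi⟩

lemma key_curve (σ d : Fin n → ℝ) {y : Fin n → ℝ}
    (hmin : IsLocalMinOn (fQ σ d) (BQ n) y) (hy : ∑ i, y i * y i = 1)
    (v : Fin n → ℝ) (hov : ∑ i, y i * v i = 0)
    (hdir : (∑ i, σ i * y i * v i) + (∑ i, d i * v i) < 0) : False := by
  set A := ∑ i, σ i * y i^2 with hA
  set B := ∑ i, σ i * y i * v i with hB
  set C := ∑ i, σ i * v i^2 with hC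
  set D := ∑ i, d i * y i with hD
  set G := ∑ i, d i * v i with hG
  set N := ∑ i, v i * v i with hN
  have hvne : ∃ i, v i ≠ 0 := by
    by_contra hh; push_neg at hh
    have hB0 : B = 0 := Finset.sum_eq_zero (fun i _ => by rw [hh i]; ring)
    have hG0 : G = 0 := Finset.sum_eq_zero (fun i _ => by rw [hh i]; ring)
    rw [hB0, hG0] at hdir; norm_num at hdir
  have hNpos : 0 < N := sum_sq_pos hvne
  set W := -(B + G) with hW
  have hWpos : 0 < W := by rw [hW]; linarith
  set K := N*|A|/2 + N*|D| + N*|B| + |C|/2 with hK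
  have hKnn : 0 ≤ K := by rw [hK]; positivity
  set u : ℝ → ℝ := fun s => Real.sqrt (1 - s^2*N) with hu
  have hbasic : ∀ s : ℝ, 0 < s → s ≤ 1/(N+1) →
      ((u s)^2 = 1 - s^2*N ∧ 0 ≤ u s ∧ u s ≤ 1 ∧ s^2*N ≤ 1 ∧ s ≤ 1) := by
    intro s h0 h1
    have hs1 : s ≤ 1 := le_trans h1 (by rw [div_le_one (by positivity)]; linarith)
    have hsN : s^2*N ≤ 1 := by
      have h2 : s*(N+1) ≤ 1 := by rwa [← le_div_iff₀ (by positivity)]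
      nlinarith
    have h2 : (u s)^2 = 1 - s^2*N := Real.sq_sqrt (by linarith)
    have h3 : 0 ≤ u s := Real.sqrt_nonneg _
    refine ⟨h2, h3, by nlinarith, hsN, hs1⟩
  set ε := min (1/(N+1)) (W/(K+1)) with hε
  have hεpos : 0 < ε := lt_min (by positivity) (by positivity)
  refine kill hmin (c := fun s => (fun i => u s * y i + s * v i)) ?_ ?_ ?_
  · refine tendsto_pi_nhds.2 (fun i => ?_)
    have hcu : Continuous u := by
      rw [hu]; exact Real.continuous_sqrt.comp (by fun_prop)
    have hcont : Continuous (fun s : ℝ => u s * y i + s * v i) := by fun_prop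
    have h0 := (hcont.tendsto 0).mono_left (nhdsWithin_le_nhds (s := Ioi (0:ℝ)))
    have he : u 0 * y i + 0 * v i = y i := by
      have : u 0 = 1 := by rw [hu]; simp
      rw [this]; ring
    rwa [he] at h0
  · refine ev_Ioo hεpos (fun s hs0 hs1 => ?_)
    obtain ⟨h2, h3, h4, h5, h6⟩ :=
      hbasic s hs0 (le_of_lt (lt_of_lt_of_le hs1 (min_le_left _ _)))
    rw [hN] at h2
    exact le_of_eq (curve_norm y v hy hov (u s) s h2)
  · refine ev_Ioo hεpos (fun s hs0 hs1 => ?_)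
    have hsε1 : s < 1/(N+1) := lt_of_lt_of_le hs1 (min_le_left _ _)
    have hsε2 : s < W/(K+1) := lt_of_lt_of_le hs1 (min_le_right _ _)
    obtain ⟨h2, h3, h4, h5, h6⟩ := hbasic s hs0 (le_of_lt hsε1)
    have hu_ge : 1 - s^2*N ≤ u s := by
      have hx : u s * u s ≤ u s := mul_le_of_le_one_left h3 h4
      have e : (u s)^2 = u s * u s := by ring
      linarith [hx, e ▸ h2.symm.le, h2.symm.ge]
    have hΔ := curve_delta σ d y v (u s) s
    rw [← hA, ← hB, ← hC, ← hD, ← hG] at hΔ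
    have habs : |u s - 1| ≤ s^2*N := abs_le.2 ⟨by linarith, by linarith⟩
    have hfac1 : (0:ℝ) ≤ s^2*N/2 :=
      div_nonneg (mul_nonneg (sq_nonneg s) hNpos.le) (by norm_num)
    have e1 : (1/2)*((u s)^2-1)*A ≤ s^2*(N*|A|/2) := by
      calc (1/2)*((u s)^2-1)*A = s^2*N/2 * (-A) := by rw [h2]; ring
        _ ≤ s^2*N/2 * |A| := mul_le_mul_of_nonneg_left (neg_le_abs A) hfac1
        _ = s^2*(N*|A|/2) := by ring
    have e2 : (u s - 1)*D ≤ s^2*(N*|D|) := by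
      calc (u s - 1)*D ≤ |(u s - 1)*D| := le_abs_self _
        _ = |u s - 1| * |D| := abs_mul _ _
        _ ≤ (s^2*N) * |D| := mul_le_mul_of_nonneg_right habs (abs_nonneg _)
        _ = s^2*(N*|D|) := by ring
    have e3 : s*B*(u s - 1) ≤ s^2*(N*|B|) := by
      calc s*B*(u s - 1) ≤ |s*B*(u s - 1)| := le_abs_self _
        _ = s * |B| * |u s - 1| := by
            rw [abs_mul, abs_mul, abs_of_nonneg (le_of_lt hs0)]
        _ ≤ s * |B| * (s^2*N) :=
            mul_le_mul_of_nonneg_left habs (mul_nonneg hs0.le (abs_nonneg _))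
        _ ≤ 1 * |B| * (s^2*N) :=
            mul_le_mul_of_nonneg_right
              (mul_le_mul_of_nonneg_right h6 (abs_nonneg _))
              (mul_nonneg (sq_nonneg s) hNpos.le)
        _ = s^2*(N*|B|) := by ring
    have e4 : (1/2)*s^2*C ≤ s^2*(|C|/2) := by
      calc (1/2)*s^2*C = s^2/2 * C := by ring
        _ ≤ s^2/2 * |C| := mul_le_mul_of_nonneg_left (le_abs_self C) (by positivity)
        _ = s^2*(|C|/2) := by ring
    have hWe : s*(u s)*B + s*G = -(s*W) + s*B*(u s - 1) := by rw [hW]; ring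
    have hΔle : fQ σ d (fun i => u s * y i + s * v i) - fQ σ d y ≤ -(s*W) + s^2*K := by
      rw [hΔ]; rw [hK]; linarith
    have hfin : s^2*K < s*W := by
      have hsK : s*(K+1) < W := by rwa [← lt_div_iff₀ (by positivity)]
      nlinarith
    show fQ σ d (fun i => u s * y i + s * v i) < fQ σ d y
    linarith


lemma sonc (σ d : Fin n → ℝ) {y : Fin n → ℝ} {μ : ℝ}
    (hmin : IsLocalMinOn (fQ σ d) (BQ n) y) (hy : ∑ i, y i * y i = 1)
    (hst : ∀ i, (σ i + μ) * y i + d i = 0)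
    (z : Fin n → ℝ) (hoz : ∑ i, y i * z i = 0) :
    0 ≤ (∑ i, σ i * z i^2) + μ * (∑ i, z i * z i) := by
  by_contra hcon
  push_neg at hcon
  set A := ∑ i, σ i * y i^2 with hA
  set B := ∑ i, σ i * y i * z i with hB
  set C := ∑ i, σ i * z i^2 with hC
  set D := ∑ i, d i * y i with hD
  set G := ∑ i, d i * z i with hG
  set N := ∑ i, z i * z i with hN
  have hzne : ∃ i, z i ≠ 0 := by
    by_contra hh; push_neg at hh
    have hC0 : C = 0 := Finset.sum_eq_zero (fun i _ => by rw [hh i]; ring)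
    have hN0 : N = 0 := Finset.sum_eq_zero (fun i _ => by rw [hh i]; ring)
    rw [hC0, hN0] at hcon; norm_num at hcon
  have hNpos : 0 < N := sum_sq_pos hzne
  have hDval : D = -A - μ := sum_dy σ d hst hy
  have hGval : G = -B := by
    have h1 : ∀ j, d j * z j = -(σ j * y j * z j) - μ*(y j * z j) := by
      intro j
      have hd : d j = -((σ j + μ) * y j) := by linarith [hst j]
      rw [hd]; ring
    rw [hG, Finset.sum_congr rfl (fun j _ => h1 j), Finset.sum_sub_distrib,
      ← Finset.mul_sum, hoz, Finset.sum_neg_distrib, ← hB]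
    ring
  clear_value A B C D G N
  set P := -(C + μ*N) with hP
  have hPpos : 0 < P := by rw [hP]; linarith
  set K2 := N^2*|A+μ|/2 + N*|B| with hK2
  have hK2nn : 0 ≤ K2 := by
    rw [hK2]
    have : (0:ℝ) ≤ N^2*|A+μ|/2 :=
      div_nonneg (mul_nonneg (sq_nonneg N) (abs_nonneg _)) (by norm_num)
    have h2 : (0:ℝ) ≤ N*|B| := mul_nonneg hNpos.le (abs_nonneg _)
    linarith
  clear_value P K2
  set u : ℝ → ℝ := fun s => Real.sqrt (1 - s^2*N) with hu
  have hbasic : ∀ s : ℝ, 0 < s → s ≤ 1/(N+1) →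
      ((u s)^2 = 1 - s^2*N ∧ 0 ≤ u s ∧ u s ≤ 1 ∧ s^2*N ≤ 1 ∧ s ≤ 1) := by
    intro s h0 h1
    have hs1 : s ≤ 1 := le_trans h1 (by rw [div_le_one (by positivity)]; linarith)
    have hsN : s^2*N ≤ 1 := by
      have h2 : s*(N+1) ≤ 1 := by rwa [← le_div_iff₀ (by positivity)]
      nlinarith
    have h2 : (u s)^2 = 1 - s^2*N := Real.sq_sqrt (by linarith)
    have h3 : 0 ≤ u s := Real.sqrt_nonneg _
    refine ⟨h2, h3, by nlinarith, hsN, hs1⟩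
  set ε := min (1/(N+1)) (P/(2*(K2+1))) with hε
  have hεpos : 0 < ε := lt_min (by positivity) (by positivity)
  refine kill hmin (c := fun s => (fun i => u s * y i + s * z i)) ?_ ?_ ?_
  · refine tendsto_pi_nhds.2 (fun i => ?_)
    have hcu : Continuous u := by
      rw [hu]; exact Real.continuous_sqrt.comp (by fun_prop)
    have hcont : Continuous (fun s : ℝ => u s * y i + s * z i) := by fun_prop
    have h0 := (hcont.tendsto 0).mono_left (nhdsWithin_le_nhds (s := Ioi (0:ℝ)))
    have he : u 0 * y i + 0 * z i = y i := by
      have : u 0 = 1 := by rw [hu]; simp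
      rw [this]; ring
    rwa [he] at h0
  · refine ev_Ioo hεpos (fun s hs0 hs1 => ?_)
    obtain ⟨h2, h3, h4, h5, h6⟩ :=
      hbasic s hs0 (le_of_lt (lt_of_lt_of_le hs1 (min_le_left _ _)))
    rw [hN] at h2
    exact le_of_eq (curve_norm y z hy hoz (u s) s h2)
  · refine ev_Ioo hεpos (fun s hs0 hs1 => ?_)
    have hsε1 : s < 1/(N+1) := lt_of_lt_of_le hs1 (min_le_left _ _)
    have hsε2 : s < P/(2*(K2+1)) := lt_of_lt_of_le hs1 (min_le_right _ _)
    obtain ⟨h2, h3, h4, h5, h6⟩ := hbasic s hs0 (le_of_lt hsε1)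
    have hX0 : 0 ≤ s^2*N := mul_nonneg (sq_nonneg s) hNpos.le
    -- lower bound on 1 - u
    have hwlo : s^2*N/2 ≤ 1 - u s := by
      have hq : (1:ℝ) - s^2*N ≤ (1 - s^2*N/2)^2 := by nlinarith [sq_nonneg (s^2*N)]
      have hq2 := Real.sqrt_le_sqrt hq
      rw [Real.sqrt_sq (by linarith : (0:ℝ) ≤ 1 - s^2*N/2)] at hq2
      have : u s ≤ 1 - s^2*N/2 := hq2
      linarith
    -- upper bound on 1 - u
    have hwhi : 1 - u s ≤ s^2*N/2 + s^4*N^2/2 := by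
      by_cases hcase : 0 ≤ 1 - s^2*N/2 - s^4*N^2/2
      · have ht : (0:ℝ) ≤ (s^2*N)^2*((1 - s^2*N)*(s^2*N+3)) :=
          mul_nonneg (sq_nonneg _)
            (mul_nonneg (by linarith) (by linarith))
        have hq2 : (1 - s^2*N/2 - s^4*N^2/2)^2 ≤ 1 - s^2*N := by nlinarith [ht]
        have hle : 1 - s^2*N/2 - s^4*N^2/2 ≤ u s := by
          have := Real.sqrt_le_sqrt hq2
          rwa [Real.sqrt_sq hcase] at this
        linarith
      · push_neg at hcase
        linarith
    have hwX : 1 - u s ≤ s^2*N := by nlinarith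
    -- Delta formula
    have hΔ := curve_delta σ d y z (u s) s
    rw [← hA, ← hB, ← hC, ← hD, ← hG] at hΔ
    have hΔ' : fQ σ d (fun i => u s * y i + s * z i) - fQ σ d y
        = -(s^2*N/2)*A + (1 - u s)*(A+μ) - s*B*(1 - u s) + (1/2)*s^2*C := by
      rw [hΔ, hDval, hGval]
      linear_combination (1/2 : ℝ)*A*h2
    -- bound pieces
    have b1 : (1 - u s)*(A+μ) ≤ (s^2*N/2)*(A+μ) + (s^4*N^2/2)*|A+μ| := by
      rcases le_or_gt 0 (A+μ) with h | h
      · have h1 : (1 - u s)*(A+μ) ≤ (s^2*N/2 + s^4*N^2/2)*(A+μ) :=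
          mul_le_mul_of_nonneg_right hwhi h
        have h2' : (s^4*N^2/2)*(A+μ) ≤ (s^4*N^2/2)*|A+μ| :=
          mul_le_mul_of_nonneg_left (le_abs_self _) (by positivity)
        nlinarith
      · have h1 : (1 - u s)*(A+μ) ≤ (s^2*N/2)*(A+μ) :=
          mul_le_mul_of_nonpos_right hwlo h.le
        have h2' : (0:ℝ) ≤ (s^4*N^2/2)*|A+μ| := by positivity
        linarith
    have b2 : -(s*B*(1 - u s)) ≤ s^3*(N*|B|) := by
      calc -(s*B*(1 - u s)) ≤ |s*B*(1 - u s)| := neg_le_abs _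
        _ = s * |B| * (1 - u s) := by
            rw [abs_mul, abs_mul, abs_of_nonneg hs0.le,
              abs_of_nonneg (by linarith : (0:ℝ) ≤ 1 - u s)]
        _ ≤ s * |B| * (s^2*N) :=
            mul_le_mul_of_nonneg_left hwX (mul_nonneg hs0.le (abs_nonneg _))
        _ = s^3*(N*|B|) := by ring
    have hΔle : fQ σ d (fun i => u s * y i + s * z i) - fQ σ d y
        ≤ -(s^2*(P/2)) + s^4*(N^2*|A+μ|/2) + s^3*(N*|B|) := by
      rw [hΔ', hP]
      have e : -(s^2*N/2)*A + ((s^2*N/2)*(A+μ) + (s^4*N^2/2)*|A+μ|)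
          + s^3*(N*|B|) + (1/2)*s^2*C
          = -(s^2*(-(C + μ*N)/2)) + s^4*(N^2*|A+μ|/2) + s^3*(N*|B|) := by ring
      linarith [b1, b2]
    have hs4 : s^4*(N^2*|A+μ|/2) ≤ s^3*(N^2*|A+μ|/2) := by
      have h41 : s^4 ≤ s^3 := by
        nlinarith [mul_le_mul_of_nonneg_left h6 (pow_nonneg hs0.le 3)]
      exact mul_le_mul_of_nonneg_right h41 (by positivity)
    have hsK : s*(2*(K2+1)) < P := by
      rwa [← lt_div_iff₀ (by positivity)]
    have hcube : s^3*K2 = s^2*(s*K2) := by ring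
    have hfin : s^3*(N^2*|A+μ|/2) + s^3*(N*|B|) < s^2*(P/2) := by
      have e2 : s^3*(N^2*|A+μ|/2) + s^3*(N*|B|) = s^2*(s*K2) := by rw [hK2]; ring
      rw [e2]
      have : s*K2 < P/2 := by linarith [hsK, hs0, hK2nn]
      exact mul_lt_mul_of_pos_left this (by positivity)
    show fQ σ d (fun i => u s * y i + s * z i) < fQ σ d y
    linarith


lemma exists_multiplier (σ d : Fin n → ℝ) {y : Fin n → ℝ}
    (hmin : IsLocalMinOn (fQ σ d) (BQ n) y) (hy : ∑ i, y i * y i = 1) :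
    ∃ μ : ℝ, ∀ i, (σ i + μ) * y i + d i = 0 := by
  set μ : ℝ := -∑ i, ((σ i * y i + d i) * y i) with hμ
  refine ⟨μ, fun i => ?_⟩
  by_contra hcon
  set z : Fin n → ℝ := fun j => (σ j + μ) * y j + d j with hz
  have hyz : ∑ j, y j * z j = 0 := by
    have h1 : ∀ j, y j * z j = (σ j * y j + d j) * y j + μ*(y j * y j) := by
      intro j; rw [hz]; ring
    rw [Finset.sum_congr rfl (fun j _ => h1 j), Finset.sum_add_distrib,
      ← Finset.mul_sum, hy, hμ]
    ring
  have hov : ∑ j, y j * (-(z j)) = 0 := by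
    have h1 : ∀ j, y j * (-(z j)) = -(y j * z j) := fun j => by ring
    rw [Finset.sum_congr rfl (fun j _ => h1 j), Finset.sum_neg_distrib, hyz, neg_zero]
  have hNpos : 0 < ∑ j, z j * z j := sum_sq_pos ⟨i, hcon⟩
  have hdir : (∑ j, σ j * y j * (-(z j))) + (∑ j, d j * (-(z j))) < 0 := by
    have h2 : ∀ j, σ j * y j * (-(z j)) + d j * (-(z j))
        = -(z j * z j) + μ * (y j * z j) := by
      intro j; rw [hz]; ring
    rw [← Finset.sum_add_distrib, Finset.sum_congr rfl (fun j _ => h2 j),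
      Finset.sum_add_distrib, Finset.sum_neg_distrib, ← Finset.mul_sum, hyz]
    linarith
  exact key_curve σ d hmin hy (fun j => -(z j)) hov hdir


lemma diff_identity (σ d : Fin n → ℝ) {y : Fin n → ℝ} {μ : ℝ}
    (hst : ∀ i, (σ i + μ) * y i + d i = 0) (x : Fin n → ℝ) :
    fQ σ d x - fQ σ d y
      = (∑ i, (1/2)*(σ i + μ)*(x i - y i)^2)
        + (μ/2) * ((∑ i, y i * y i) - (∑ i, x i * x i)) := by
  have key : fQ σ d x - fQ σ d y
      = ∑ i, ((1/2)*(σ i + μ)*(x i - y i)^2 + (μ/2)*(y i * y i - x i * x i)) := by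
    rw [fQ_eq, fQ_eq, ← Finset.sum_sub_distrib]
    refine Finset.sum_congr rfl (fun i _ => ?_)
    have hd : d i = -((σ i + μ) * y i) := by linarith [hst i]
    rw [hd]; ring
  rw [key, Finset.sum_add_distrib, ← Finset.mul_sum, Finset.sum_sub_distrib]

lemma sum_two_ite (i0 j : Fin n) (P Q : ℝ) (F : Fin n → ℝ)
    (hF : ∀ i, F i = (if i = i0 then P else 0) + (if i = j then Q else 0)) :
    ∑ i, F i = P + Q := by
  rw [Finset.sum_congr rfl (fun i _ => hF i), Finset.sum_add_distrib,
    Finset.sum_ite_eq' Finset.univ i0 (fun _ => P),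
    Finset.sum_ite_eq' Finset.univ j (fun _ => Q)]
  simp

lemma strict_gap (σ d : Fin n → ℝ) {y : Fin n → ℝ} {μ : ℝ} {i0 j : Fin n}
    (hij : i0 ≠ j) (hmin : IsLocalMinOn (fQ σ d) (BQ n) y)
    (hy : ∑ i, y i * y i = 1) (hst : ∀ i, (σ i + μ) * y i + d i = 0)
    (h0 : σ i0 + μ < 0) (h1 : σ j + μ ≤ 0) (hy0 : y i0 ≠ 0) : False := by
  obtain ⟨τ, hτsq, hτy⟩ : ∃ τ : ℝ, τ^2 = 1 ∧ τ * y i0 = |y i0| := by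
    rcases le_or_gt 0 (y i0) with h | h
    · exact ⟨1, by norm_num, by rw [abs_of_nonneg h]; ring⟩
    · exact ⟨-1, by norm_num, by rw [abs_of_neg h]; ring⟩
  obtain ⟨τ1, hτ1sq, hτ1y⟩ : ∃ τ1 : ℝ, τ1^2 = 1 ∧ τ1 * |y j| = y j := by
    rcases le_or_gt 0 (y j) with h | h
    · exact ⟨1, by norm_num, by rw [abs_of_nonneg h]; ring⟩
    · exact ⟨-1, by norm_num, by rw [abs_of_neg h]; ring⟩
  have habs : 0 < |y i0| := abs_pos.2 hy0
  have hji : j ≠ i0 := Ne.symm hij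
  set w : ℝ → ℝ := fun s => 2*s*|y i0| - s^2 with hwdef
  set c : ℝ → Fin n → ℝ := fun s => (fun i => if i = i0 then y i0 - τ*s
      else if i = j then τ1 * Real.sqrt (y j^2 + w s) else y i) with hc
  have hci0 : ∀ s, c s i0 = y i0 - τ*s := fun s => by rw [hc]; simp
  have hcj : ∀ s, c s j = τ1 * Real.sqrt (y j^2 + w s) := fun s => by
    rw [hc]; simp [hji]
  have hcother : ∀ s, ∀ i, i ≠ i0 → i ≠ j → c s i = y i := fun s i hi hj => by
    rw [hc]; simp [hi, hj]
  have hw0 : ∀ s : ℝ, 0 < s → s < |y i0| → 0 ≤ w s := by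
    intro s hs1 hs2
    rw [hwdef]; dsimp only; nlinarith
  have hcjsq : ∀ s : ℝ, 0 ≤ w s → c s j * c s j = y j^2 + w s := by
    intro s hws
    rw [hcj s]
    have h2 : Real.sqrt (y j^2 + w s) ^ 2 = y j^2 + w s :=
      Real.sq_sqrt (by positivity)
    calc τ1 * Real.sqrt (y j^2 + w s) * (τ1 * Real.sqrt (y j^2 + w s))
        = τ1^2 * (Real.sqrt (y j^2 + w s))^2 := by ring
      _ = y j^2 + w s := by rw [hτ1sq, h2]; ring
  have hnorm : ∀ s : ℝ, 0 < s → s < |y i0| → ∑ i, c s i * c s i = 1 := by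
    intro s hs1 hs2
    have hws := hw0 s hs1 hs2
    have hkey : ∑ i, (c s i * c s i - y i * y i)
        = ((y i0 - τ*s)*(y i0 - τ*s) - y i0 * y i0) + (w s) := by
      refine sum_two_ite i0 j _ _ _ (fun i => ?_)
      by_cases hi : i = i0
      · rw [hi, hci0 s]; simp [hij]
      · by_cases hj : i = j
        · rw [hj, hcjsq s hws]
          simp [hji]
          ring
        · rw [hcother s i hi hj]; simp [hi, hj]
    rw [Finset.sum_sub_distrib, hy] at hkey
    have hval : ((y i0 - τ*s)*(y i0 - τ*s) - y i0 * y i0) + (w s) = 0 := by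
      have e1 : (y i0 - τ*s)*(y i0 - τ*s) - y i0 * y i0
          = -2*s*(τ*y i0) + (τ*s)^2 := by ring
      rw [hwdef] at *
      dsimp only at *
      rw [e1, hτy]
      have e2 : (τ*s)^2 = s^2 := by rw [mul_pow, hτsq, one_mul]
      rw [e2]; ring
    linarith
  refine kill hmin (c := c) ?_ ?_ ?_
  · refine tendsto_pi_nhds.2 (fun i => ?_)
    by_cases hi : i = i0
    · rw [hi]
      simp only [hci0]
      have : Tendsto (fun s : ℝ => y i0 - τ*s) (𝓝 (0:ℝ)) (𝓝 (y i0 - τ*0)) :=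
        (continuous_const.sub (continuous_const.mul continuous_id)).tendsto 0
      simpa using this.mono_left nhdsWithin_le_nhds
    · by_cases hj : i = j
      · rw [hj]
        simp only [hcj]
        have hcont : Continuous (fun s : ℝ => τ1 * Real.sqrt (y j^2 + w s)) := by
          rw [hwdef]
          exact continuous_const.mul (Real.continuous_sqrt.comp (by fun_prop))
        have h0' := (hcont.tendsto 0).mono_left (nhdsWithin_le_nhds (s := Ioi (0:ℝ)))
        have he : τ1 * Real.sqrt (y j^2 + w 0) = y j := by
          rw [hwdef]
          dsimp only
          rw [show y j^2 + (2*0*|y i0| - 0^2) = y j^2 by ring,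
            Real.sqrt_sq_eq_abs, hτ1y]
        rwa [he] at h0'
      · simp only [hcother _ i hi hj]
        exact tendsto_const_nhds
  · refine ev_Ioo habs (fun s hs1 hs2 => ?_)
    exact le_of_eq (hnorm s hs1 hs2)
  · refine ev_Ioo habs (fun s hs1 hs2 => ?_)
    have hws := hw0 s hs1 hs2
    have hΔ := diff_identity σ d hst (c s)
    rw [hnorm s hs1 hs2, hy, sub_self, mul_zero, add_zero] at hΔ
    have hsum : ∑ i, (1/2)*(σ i + μ)*(c s i - y i)^2
        = (1/2)*(σ i0 + μ)*((y i0 - τ*s) - y i0)^2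
          + (1/2)*(σ j + μ)*(c s j - y j)^2 := by
      refine sum_two_ite i0 j _ _ _ (fun i => ?_)
      by_cases hi : i = i0
      · rw [hi, hci0 s]; simp [hij]
      · by_cases hj : i = j
        · rw [hj]; simp [hji]
        · rw [hcother s i hi hj]; simp [hi, hj]
    have hterm1 : (1/2)*(σ i0 + μ)*((y i0 - τ*s) - y i0)^2 = (1/2)*(σ i0 + μ)*s^2 := by
      have e : ((y i0 - τ*s) - y i0)^2 = (τ*s)^2 := by ring
      rw [e, mul_pow, hτsq, one_mul]
    have hterm2 : (1/2)*(σ j + μ)*(c s j - y j)^2 ≤ 0 :=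
      mul_nonpos_of_nonpos_of_nonneg (by linarith) (sq_nonneg _)
    have hneg : (1/2)*(σ i0 + μ)*s^2 < 0 := by nlinarith [mul_pos hs1 hs1]
    have : fQ σ d (c s) - fQ σ d y < 0 := by
      rw [hΔ, hsum, hterm1]; linarith
    linarith


lemma sonc_basis (σ d : Fin n → ℝ) {y : Fin n → ℝ} {μ : ℝ}
    (hmin : IsLocalMinOn (fQ σ d) (BQ n) y) (hy : ∑ i, y i * y i = 1)
    (hst : ∀ i, (σ i + μ) * y i + d i = 0) (i0 : Fin n) (hy00 : y i0 = 0) :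
    0 ≤ σ i0 + μ := by
  have hoz : ∑ i, y i * (if i = i0 then (1:ℝ) else 0) = 0 := by
    rw [Finset.sum_congr rfl
      (fun i _ => show y i * (if i = i0 then (1:ℝ) else 0)
        = (if i = i0 then y i else 0) by by_cases hi : i = i0 <;> simp [hi]),
      Finset.sum_ite_eq' Finset.univ i0 (fun i => y i)]
    simp [hy00]
  have hz := sonc σ d hmin hy hst (fun j => if j = i0 then 1 else 0) hoz
  have e1 : (∑ i, σ i * (if i = i0 then (1:ℝ) else 0)^2) = σ i0 := by
    rw [Finset.sum_congr rfl
      (fun i _ => show σ i * (if i = i0 then (1:ℝ) else 0)^2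
        = (if i = i0 then σ i else 0) by by_cases hi : i = i0 <;> simp [hi]),
      Finset.sum_ite_eq' Finset.univ i0 (fun i => σ i)]
    simp
  have e2 : (∑ i, (if i = i0 then (1:ℝ) else 0) * (if i = i0 then (1:ℝ) else 0)) = 1 := by
    rw [Finset.sum_congr rfl
      (fun i _ => show (if i = i0 then (1:ℝ) else 0) * (if i = i0 then (1:ℝ) else 0)
        = (if i = i0 then (1:ℝ) else 0) by by_cases hi : i = i0 <;> simp [hi]),
      Finset.sum_ite_eq' Finset.univ i0 (fun _ => (1:ℝ))]
    simp
  rw [e1, e2] at hz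
  linarith

lemma main2 (σ d : Fin n → ℝ) {i0 i1 : Fin n} (hi01 : i0 ≠ i1)
    (hle : ∀ i, σ i0 ≤ σ i) (hle1 : ∀ i, i ≠ i0 → σ i1 ≤ σ i)
    (hneg : σ i0 < 0) (hd0 : d i0 ≠ 0)
    {y : Fin n → ℝ} {μ : ℝ}
    (hmin : IsLocalMinOn (fQ σ d) (BQ n) y)
    (hng : ¬ ∀ x ∈ BQ n, fQ σ d y ≤ fQ σ d x)
    (hst : ∀ i, (σ i + μ) * y i + d i = 0)
    (hy : ∑ i, y i * y i = 1) :
    (max (-σ i1) 0 < μ ∧ μ < -σ i0) ∧ σ i0 + μ < 0 ∧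
      (∀ i, i ≠ i0 → 0 < σ i + μ) ∧ (∀ i, σ i + μ ≠ 0) ∧
      (∀ i, y i = -(d i)/(σ i + μ)) ∧
      ((∑ i, d i^2/(σ i + μ)^2) = 1) ∧ ((∑ i, d i^2/(σ i + μ)^3) ≤ 0) := by
  have hμ0 : 0 ≤ μ := mu_nonneg σ d hmin hst hy
  have hne0 : σ i0 + μ ≠ 0 := by
    intro h
    have h1 := hst i0
    rw [h] at h1
    exact hd0 (by linarith)
  have hlt0 : σ i0 + μ < 0 := by
    rcases lt_or_gt_of_ne hne0 with h | h
    · exact h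
    · exact absurd (global_min σ d y μ hst hy hμ0
        (fun i => by have := hle i; linarith)) hng
  have hy00 : y i0 ≠ 0 := by
    intro h
    have h1 := hst i0
    rw [h, mul_zero, zero_add] at h1
    exact hd0 h1
  have hσ1 : -σ i1 < μ := by
    by_contra hcon
    push_neg at hcon
    exact strict_gap σ d hi01 hmin hy hst hlt0 (by linarith) hy00
  have hμpos : 0 < μ := by
    rcases eq_or_lt_of_le hμ0 with h | h
    · exfalso
      refine kill_gradzero σ d i0 hneg hy00 ?_ hmin hy
      have h1 := hst i0
      rw [← h] at h1
      linarith
    · exact h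
  have hpos1 : ∀ i, i ≠ i0 → 0 < σ i + μ := by
    intro i hi
    have := hle1 i hi
    linarith
  have hnei : ∀ i, σ i + μ ≠ 0 := by
    intro i
    by_cases hi : i = i0
    · rw [hi]; exact hne0
    · exact ne_of_gt (hpos1 i hi)
  have hyi : ∀ i, y i = -(d i)/(σ i + μ) := by
    intro i
    have h1 := hst i
    have hne := hnei i
    field_simp
    linarith
  have hsq : ∀ i, d i^2/(σ i + μ)^2 = y i * y i := by
    intro i
    have hne := hnei i
    rw [hyi i]
    field_simp
  have hsum2 : (∑ i, d i^2/(σ i + μ)^2) = 1 := by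
    rw [Finset.sum_congr rfl (fun i _ => hsq i), hy]
  have hcube : ∀ i, d i^2/(σ i + μ)^3 = (y i * y i)/(σ i + μ) := by
    intro i
    have hne := hnei i
    rw [hyi i]
    field_simp
  have hsum3 : (∑ i, d i^2/(σ i + μ)^3) ≤ 0 := by
    rw [Finset.sum_congr rfl (fun i _ => hcube i)]
    by_contra hcon
    push_neg at hcon
    set a : ℝ := (y i0 * y i0)/(σ i0 + μ) with ha
    have hapos : a < 0 := div_neg_of_pos_of_neg (mul_self_pos.2 hy00) hlt0
    set b : ℝ := ∑ i ∈ Finset.univ.erase i0, (y i * y i)/(σ i + μ) with hb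
    have hsplit : b + a = ∑ i, (y i * y i)/(σ i + μ) :=
      Finset.sum_erase_add Finset.univ _ (Finset.mem_univ i0)
    have hbnn : 0 ≤ b := Finset.sum_nonneg (fun i hi => by
      have hine : i ≠ i0 := Finset.ne_of_mem_erase hi
      exact div_nonneg (mul_self_nonneg _) (hpos1 i hine).le)
    have hba : -a < b := by linarith
    have hbpos : 0 < b := by linarith
    set β : ℝ := b/(-a) with hβ
    have hβ1 : 1 < β := by
      rw [hβ, lt_div_iff₀ (by linarith)]
      linarith
    have hane : (-a) ≠ 0 := ne_of_gt (by linarith)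
    have hβa : β * a = -b := by
      calc β * a = -(β * (-a)) := by ring
        _ = -b := by rw [hβ, div_mul_cancel₀ _ hane]
    set z : Fin n → ℝ := fun i => (if i = i0 then β else 1) * (y i/(σ i + μ)) with hz
    have hterm : ∀ i, y i * z i = (if i = i0 then β else 1) * ((y i * y i)/(σ i + μ)) := by
      intro i; rw [hz]; ring
    have hoz : ∑ i, y i * z i = 0 := by
      rw [Finset.sum_congr rfl (fun i _ => hterm i)]
      have hsplit2 : (∑ i ∈ Finset.univ.erase i0,
            (if i = i0 then β else 1) * ((y i * y i)/(σ i + μ)))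
          + (if i0 = i0 then β else 1) * ((y i0 * y i0)/(σ i0 + μ))
          = ∑ i, (if i = i0 then β else 1) * ((y i * y i)/(σ i + μ)) :=
        Finset.sum_erase_add Finset.univ _ (Finset.mem_univ i0)
      rw [← hsplit2, if_pos rfl]
      have herase : (∑ i ∈ Finset.univ.erase i0,
            (if i = i0 then β else 1) * ((y i * y i)/(σ i + μ))) = b := by
        rw [hb]
        refine Finset.sum_congr rfl (fun i hi => ?_)
        rw [if_neg (Finset.ne_of_mem_erase hi), one_mul]
      rw [herase, ← ha, hβa]
      ring
    have hson := sonc σ d hmin hy hst z hoz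
    have hterm2 : ∀ i, σ i * z i^2 + μ * (z i * z i)
        = ((if i = i0 then β else 1))^2 * ((y i * y i)/(σ i + μ)) := by
      intro i
      have hne := hnei i
      have hgen : ∀ c : ℝ, σ i * (c*(y i/(σ i + μ)))^2
          + μ*((c*(y i/(σ i + μ)))*(c*(y i/(σ i + μ))))
          = c^2*((y i*y i)/(σ i + μ)) := by
        intro c
        field_simp
      rw [hz]
      exact hgen _
    have hcomb : (∑ i, σ i * z i^2) + μ * (∑ i, z i * z i)
        = ∑ i, (((if i = i0 then β else 1))^2 * ((y i * y i)/(σ i + μ))) := by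
      rw [Finset.mul_sum, ← Finset.sum_add_distrib]
      exact Finset.sum_congr rfl (fun i _ => hterm2 i)
    have hsplit3 : (∑ i ∈ Finset.univ.erase i0,
          ((if i = i0 then β else 1))^2 * ((y i * y i)/(σ i + μ)))
        + ((if i0 = i0 then β else 1))^2 * ((y i0 * y i0)/(σ i0 + μ))
        = ∑ i, (((if i = i0 then β else 1))^2 * ((y i * y i)/(σ i + μ))) :=
      Finset.sum_erase_add Finset.univ _ (Finset.mem_univ i0)
    have herase3 : (∑ i ∈ Finset.univ.erase i0,
          ((if i = i0 then β else 1))^2 * ((y i * y i)/(σ i + μ))) = b := by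
      rw [hb]
      refine Finset.sum_congr rfl (fun i hi => ?_)
      rw [if_neg (Finset.ne_of_mem_erase hi), one_pow, one_mul]
    rw [hcomb, ← hsplit3, herase3, if_pos rfl, ← ha] at hson
    -- hson : 0 ≤ b + β^2 * a ; but β^2*a = β*(β*a) = -β*b
    have hfin : b + β^2*a = b*(1 - β) := by
      have : β^2*a = β*(β*a) := by ring
      rw [this, hβa]; ring
    rw [hfin] at hson
    nlinarith
  exact ⟨⟨max_lt (by linarith) hμpos, by linarith⟩, hlt0, hpos1, hnei, hyi, hsum2, hsum3⟩


lemma phi_hasDeriv (σ d : Fin n → ℝ) {μ : ℝ} (hne : ∀ i, σ i + μ ≠ 0) :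
    HasDerivAt (fun t => (∑ i, d i^2/(σ i + t)^2) - 1)
      (∑ i, -2*(d i^2/(σ i + μ)^3)) μ := by
  have h : ∀ i ∈ Finset.univ, HasDerivAt (fun t : ℝ => d i^2/(σ i + t)^2)
      (-2*(d i^2/(σ i + μ)^3)) μ := by
    intro i _
    have hb : HasDerivAt (fun t : ℝ => σ i + t) 1 μ := (hasDerivAt_id μ).const_add (σ i)
    have hsq : HasDerivAt (fun t : ℝ => (σ i + t)^2) (2*(σ i + μ)^1*1) μ := hb.pow 2
    have hdiv := (hasDerivAt_const μ (d i^2)).fun_div hsq (pow_ne_zero 2 (hne i))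
    refine hdiv.congr_deriv ?_
    have := hne i
    field_simp
    ring
  exact (HasDerivAt.fun_sum h).sub_const 1

lemma mu_unique (σ d : Fin n → ℝ) (i0 : Fin n) (hd0 : d i0 ≠ 0)
    {μ1 μ2 : ℝ} (hlt : μ1 < μ2)
    (hneg1 : σ i0 + μ1 < 0) (hpos1 : ∀ i, i ≠ i0 → 0 < σ i + μ1)
    (hneg2 : σ i0 + μ2 < 0) (hpos2 : ∀ i, i ≠ i0 → 0 < σ i + μ2)
    (hs1 : ∑ i, d i^2/(σ i + μ1)^3 ≤ 0)
    (hsum1 : ∑ i, d i^2/(σ i + μ1)^2 = 1)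
    (hsum2 : ∑ i, d i^2/(σ i + μ2)^2 = 1) : False := by
  set h : ℝ := μ2 - μ1 with hh
  have hhpos : 0 < h := by rw [hh]; linarith
  set F : Fin n → ℝ := fun i => d i^2/(σ i + μ2)^2 - d i^2/(σ i + μ1)^2
      + 2*h*(d i^2/(σ i + μ1)^3) with hF
  have hSle : ∑ i, F i ≤ 0 := by
    have e : ∑ i, F i = (∑ i, d i^2/(σ i + μ2)^2) - (∑ i, d i^2/(σ i + μ1)^2)
        + 2*h*(∑ i, d i^2/(σ i + μ1)^3) := by
      simp only [hF]
      rw [Finset.sum_add_distrib, Finset.sum_sub_distrib, ← Finset.mul_sum]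
    rw [e, hsum1, hsum2]
    nlinarith
  have hkey : ∀ i, (σ i + μ1) ≠ 0 → (σ i + μ2) ≠ 0 →
      F i = d i^2 * (h^2*(2*(σ i + μ2)+(σ i + μ1))) / ((σ i + μ1)^3*(σ i + μ2)^2) := by
    intro i h1 h2
    rw [hF, hh]
    field_simp
    ring
  have hSpos : 0 < ∑ i, F i := by
    refine Finset.sum_pos' (fun i _ => ?_) ⟨i0, Finset.mem_univ i0, ?_⟩
    · by_cases hi : i = i0
      · rw [hi]
        rw [hkey i0 (ne_of_lt hneg1) (ne_of_lt hneg2)]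
        have hT2 : 0 < (σ i0 + μ2)^2 := by nlinarith
        have ht2 : 0 < (σ i0 + μ1)^2 := by nlinarith
        have ht3 : (σ i0 + μ1)^3 < 0 := by
          nlinarith [mul_neg_of_neg_of_pos hneg1 ht2]
        have hnum : d i0^2 * (h^2*(2*(σ i0 + μ2)+(σ i0 + μ1))) ≤ 0 := by
          have hd2 : 0 ≤ d i0^2 := sq_nonneg _
          have hin : h^2*(2*(σ i0 + μ2)+(σ i0 + μ1)) ≤ 0 :=
            mul_nonpos_of_nonneg_of_nonpos (sq_nonneg _) (by linarith)
          exact mul_nonpos_of_nonneg_of_nonpos hd2 hin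
        have hden : (σ i0 + μ1)^3*(σ i0 + μ2)^2 < 0 :=
          mul_neg_of_neg_of_pos ht3 hT2
        rcases lt_or_eq_of_le hnum with hlt' | heq
        · exact (div_pos_of_neg_of_neg hlt' hden).le
        · rw [heq, zero_div]
      · have h1 := hpos1 i hi
        have h2 := hpos2 i hi
        rw [hkey i (ne_of_gt h1) (ne_of_gt h2)]
        have hnum : 0 ≤ d i^2 * (h^2*(2*(σ i + μ2)+(σ i + μ1))) := by
          have : (0:ℝ) ≤ h^2*(2*(σ i + μ2)+(σ i + μ1)) :=
            mul_nonneg (sq_nonneg _) (by linarith)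
          exact mul_nonneg (sq_nonneg _) this
        have hden : 0 < (σ i + μ1)^3*(σ i + μ2)^2 := by positivity
        exact div_nonneg hnum hden.le
    · rw [hkey i0 (ne_of_lt hneg1) (ne_of_lt hneg2)]
      have hT2 : 0 < (σ i0 + μ2)^2 := by nlinarith
      have ht2 : 0 < (σ i0 + μ1)^2 := by nlinarith
      have ht3 : (σ i0 + μ1)^3 < 0 := by
        nlinarith [mul_neg_of_neg_of_pos hneg1 ht2]
      have hd2 : 0 < d i0^2 := lt_of_le_of_ne (sq_nonneg _) (Ne.symm (pow_ne_zero 2 hd0))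
      have hh2 : 0 < h^2 := pow_pos hhpos 2
      have hnum : d i0^2 * (h^2*(2*(σ i0 + μ2)+(σ i0 + μ1))) < 0 :=
        mul_neg_of_pos_of_neg hd2 (mul_neg_of_pos_of_neg hh2 (by linarith))
      have hden : (σ i0 + μ1)^3*(σ i0 + μ2)^2 < 0 :=
        mul_neg_of_neg_of_pos ht3 hT2
      exact div_pos_of_neg_of_neg hnum hden
  linarith

end TRS

open TRS in
/-- Martínez / Lucidi–Palagi–Roma: if `k ≥ 2`, or `k = 1` and `d₁ = 0`, the diagonalized
trust region subproblem has no local non-global minimizer.  Otherwise there is at most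
one local non-global minimizer `ȳ`, and its Lagrange multiplier `μ̄` lies in
`(max{-σ₂,0}, -σ₁)` and satisfies `φ(μ̄) = 0`, `φ'(μ̄) ≥ 0`. -/
theorem stmt_5 {n : ℕ} (hn : 2 ≤ n) (k : ℕ) (hk1 : 1 ≤ k) (hkn : k ≤ n)
    (σ d : Fin n → ℝ) (hmono : Monotone σ)
    (hflat : ∀ i : Fin n, (i : ℕ) < k → σ i = σ ⟨0, by omega⟩)
    (hgap : ∀ i : Fin n, k ≤ (i : ℕ) → σ ⟨0, by omega⟩ < σ i)
    (hneg : σ ⟨0, by omega⟩ < 0) :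
    let f : (Fin n → ℝ) → ℝ :=
      fun y => (1 / 2) * ∑ i, σ i * y i ^ 2 + ∑ i, d i * y i
    let B : Set (Fin n → ℝ) := {y | ∑ i, y i * y i ≤ 1}
    let φ : ℝ → ℝ := fun μ => ∑ i, d i ^ 2 / (σ i + μ) ^ 2 - 1
    ((2 ≤ k ∨ (k = 1 ∧ d ⟨0, by omega⟩ = 0)) →
        ∀ y ∈ B, IsLocalMinOn f B y → ∀ x ∈ B, f y ≤ f x) ∧
      ((k = 1 ∧ d ⟨0, by omega⟩ ≠ 0) →
        (∀ y₁ ∈ B, ∀ y₂ ∈ B,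
            IsLocalMinOn f B y₁ → ¬(∀ x ∈ B, f y₁ ≤ f x) →
            IsLocalMinOn f B y₂ → ¬(∀ x ∈ B, f y₂ ≤ f x) → y₁ = y₂) ∧
          ∀ y ∈ B, ∀ μ : ℝ,
            IsLocalMinOn f B y → ¬(∀ x ∈ B, f y ≤ f x) →
            (∀ i, (σ i + μ) * y i + d i = 0) → (∑ i, y i * y i = 1) →
            μ ∈ Set.Ioo (max (-σ ⟨1, by omega⟩) 0) (-σ ⟨0, by omega⟩) ∧
              φ μ = 0 ∧ 0 ≤ deriv φ μ) := by
  intro f B φ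
  have h0n : 0 < n := by omega
  have h1n : 1 < n := by omega
  set I0 : Fin n := ⟨0, h0n⟩ with hI0def
  set I1 : Fin n := ⟨1, h1n⟩ with hI1def
  have hI01 : I0 ≠ I1 := by
    intro hc
    have := congrArg Fin.val hc
    rw [hI0def, hI1def] at this
    simp at this
  have hneg' : σ I0 < 0 := hneg
  have hle0 : ∀ i, σ I0 ≤ σ i := fun i =>
    hmono (by rw [Fin.le_def]; exact Nat.zero_le _)
  have hle1 : ∀ i, i ≠ I0 → σ I1 ≤ σ i := by
    intro i hi
    refine hmono ?_
    rw [Fin.le_def]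
    have hv : (i : ℕ) ≠ 0 := by
      intro hc
      exact hi (Fin.ext (by rw [hc, hI0def]))
    rw [hI1def]
    simpa using Nat.one_le_iff_ne_zero.2 hv
  constructor
  · -- part 1
    intro hk y hyB hmin x hxB
    have hmin' : IsLocalMinOn (fQ σ d) (BQ n) y := hmin
    have hyB' : ∑ i, y i * y i ≤ 1 := hyB
    have hxB' : x ∈ BQ n := hxB
    show fQ σ d y ≤ fQ σ d x
    rcases lt_or_eq_of_le hyB' with hlt | hy1
    · exact (no_interior_min σ d I0 hneg' hmin' hlt).elim
    · obtain ⟨μ, hst⟩ := exists_multiplier σ d hmin' hy1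
      have hμ0 := mu_nonneg σ d hmin' hst hy1
      rcases le_or_gt 0 (σ I0 + μ) with hpos | hneg2
      · exact global_min σ d y μ hst hy1 hμ0
          (fun i => by have := hle0 i; linarith) x hxB'
      · exfalso
        by_cases hy00 : y I0 = 0
        · have := sonc_basis σ d hmin' hy1 hst I0 hy00
          linarith
        · have hd00 : d I0 ≠ 0 := by
            intro hc
            have h1 := hst I0
            rw [hc, add_zero] at h1
            rcases mul_eq_zero.1 h1 with h2 | h2
            · exact absurd h2 (ne_of_lt hneg2)
            · exact hy00 h2
          have hk2 : 2 ≤ k := by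
            rcases hk with h | ⟨h1, h2⟩
            · exact h
            · exact absurd h2 hd00
          have hflat1 : σ I1 = σ I0 := hflat I1 (show (1:ℕ) < k by omega)
          exact strict_gap σ d hI01 hmin' hy1 hst hneg2
            (by rw [hflat1]; exact hneg2.le) hy00
  · -- part 2
    rintro ⟨hk1', hd0⟩
    have hd0' : d I0 ≠ 0 := hd0
    constructor
    · -- uniqueness
      intro y1 hy1B y2 hy2B hm1 hng1 hm2 hng2
      have hm1' : IsLocalMinOn (fQ σ d) (BQ n) y1 := hm1
      have hm2' : IsLocalMinOn (fQ σ d) (BQ n) y2 := hm2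
      have hng1' : ¬ ∀ x ∈ BQ n, fQ σ d y1 ≤ fQ σ d x := hng1
      have hng2' : ¬ ∀ x ∈ BQ n, fQ σ d y2 ≤ fQ σ d x := hng2
      have hn1 : ∑ i, y1 i * y1 i = 1 := by
        rcases lt_or_eq_of_le (show ∑ i, y1 i * y1 i ≤ 1 from hy1B) with hlt | he
        · exact (no_interior_min σ d I0 hneg' hm1' hlt).elim
        · exact he
      have hn2 : ∑ i, y2 i * y2 i = 1 := by
        rcases lt_or_eq_of_le (show ∑ i, y2 i * y2 i ≤ 1 from hy2B) with hlt | he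
        · exact (no_interior_min σ d I0 hneg' hm2' hlt).elim
        · exact he
      obtain ⟨μ1, hst1⟩ := exists_multiplier σ d hm1' hn1
      obtain ⟨μ2, hst2⟩ := exists_multiplier σ d hm2' hn2
      obtain ⟨⟨hmax1, hlt1⟩, hneg1m, hpos1m, hne1m, hyi1, hsum21, hsum31⟩ :=
        main2 σ d hI01 hle0 hle1 hneg' hd0' hm1' hng1' hst1 hn1
      obtain ⟨⟨hmax2, hlt2⟩, hneg2m, hpos2m, hne2m, hyi2, hsum22, hsum32⟩ :=
        main2 σ d hI01 hle0 hle1 hneg' hd0' hm2' hng2' hst2 hn2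
      have hμeq : μ1 = μ2 := by
        rcases lt_trichotomy μ1 μ2 with h | h | h
        · exact (mu_unique σ d I0 hd0' h hneg1m hpos1m hneg2m hpos2m
            hsum31 hsum21 hsum22).elim
        · exact h
        · exact (mu_unique σ d I0 hd0' h hneg2m hpos2m hneg1m hpos1m
            hsum32 hsum22 hsum21).elim
      funext i
      rw [hyi1 i, hyi2 i, hμeq]
    · -- multiplier characterization
      intro y hyB μ hmin hng hst hy1
      have hmin' : IsLocalMinOn (fQ σ d) (BQ n) y := hmin
      have hng' : ¬ ∀ x ∈ BQ n, fQ σ d y ≤ fQ σ d x := hng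
      obtain ⟨⟨hmax, hltm⟩, hnegm, hposm, hnem, hyim, hsum2m, hsum3m⟩ :=
        main2 σ d hI01 hle0 hle1 hneg' hd0' hmin' hng' hst hy1
      refine ⟨⟨hmax, hltm⟩, ?_, ?_⟩
      · show (∑ i, d i ^ 2 / (σ i + μ) ^ 2) - 1 = 0
        rw [hsum2m]
        ring
      · have hD := (phi_hasDeriv σ d hnem).deriv
        show 0 ≤ deriv (fun t => (∑ i, d i ^ 2 / (σ i + t) ^ 2) - 1) μ
        rw [hD]
        have e : (∑ i, -2*(d i^2/(σ i + μ)^3))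
            = -2 * ∑ i, d i^2/(σ i + μ)^3 := by
          rw [Finset.mul_sum]
        rw [e]
        linarith [hsum3m]
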